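/- For a commutative ring R, the polynomial ring R[x] is weak von Neumann regular if and only if R has exactly two idempotent elements (0 and 1). -/

import Mathlib

/-- A commutative ring is weak von Neumann regular (WVNR) if for every pair of
finitely generated ideals `I ⊆ J ⊊ R`, if `J` is generated by an idempotent,
then so is `I`. -/
def IsWVNR (R : Type _) [CommRing R] : Prop :=
  ∀ I J : Ideal R, I.FG → J.FG → I ≤ J → J ≠ ⊤ →
    (∃ e : R, IsIdempotentElem e ∧ J = Ideal.span {e}) →
    ∃ f : R, IsIdempotentElem f ∧ I = Ideal.span {f}

/-- von Neumann regular: every `x` satisfies `x = x² y` for some `y`. -/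
def IsVNRegular (R : Type _) [CommRing R] : Prop :=
  ∀ x : R, ∃ y : R, x = x ^ 2 * y

open Polynomial

lemma idem_pow_eq {R : Type _} [CommRing R] {g : R} (hg : IsIdempotentElem g) :
    ∀ n : ℕ, g ^ (n + 1) = g := by
  intro n
  induction n with
  | zero => simp
  | succ k ih => rw [pow_succ, ih, hg]

lemma idem_coeff_zero_eq_zero {R : Type _} [CommRing R] [Nontrivial R] {g : R[X]}
    (hg : IsIdempotentElem g) (h0 : g.coeff 0 = 0) : g = 0 := by
  by_contra hne
  have hX : (X : R[X]) ∣ g := X_dvd_iff.mpr h0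
  obtain ⟨h, hh⟩ : (X : R[X]) ^ (g.natDegree + 1) ∣ g := by
    conv_rhs => rw [← idem_pow_eq hg g.natDegree]
    exact pow_dvd_pow_of_dvd hX _
  have hh0 : h ≠ 0 := by rintro rfl; simp at hh; exact hne hh
  have := congrArg Polynomial.natDegree hh
  rw [Polynomial.natDegree_X_pow_mul (n := g.natDegree + 1) hh0] at this
  omega

lemma idem_poly_eq_C {R : Type _} [CommRing R] [Nontrivial R] {f : R[X]}
    (hf : IsIdempotentElem f) : f = C (f.coeff 0) := by
  set a := f.coeff 0 with ha_def
  have ha : IsIdempotentElem a := by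
    have := congrArg (fun p : R[X] => p.coeff 0) hf
    simpa [Polynomial.mul_coeff_zero, isIdempotentElem_iff] using this
  have h1 : IsIdempotentElem ((1 - C a) * f) := by
    have h1f : (1 - C a) * (1 - C a) = 1 - C a := by
      have hCa : IsIdempotentElem (C a : R[X]) := by
        show C a * C a = C a
        rw [← C_mul, ha]
      exact IsIdempotentElem.one_sub hCa
    show (1 - C a) * f * ((1 - C a) * f) = _
    calc (1 - C a) * f * ((1 - C a) * f) = ((1 - C a) * (1 - C a)) * (f * f) := by ring
    _ = (1 - C a) * f := by rw [h1f, hf]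
  have h2 : IsIdempotentElem (C a * (1 - f)) := by
    have h1f : (1 - f) * (1 - f) = 1 - f := IsIdempotentElem.one_sub hf
    have hca : C a * C a = C a := by rw [← C_mul, ha]
    show C a * (1 - f) * (C a * (1 - f)) = _
    calc C a * (1 - f) * (C a * (1 - f)) = (C a * C a) * ((1 - f) * (1 - f)) := by ring
    _ = C a * (1 - f) := by rw [h1f, hca]
  have e1 : (1 - C a) * f = 0 := by
    apply idem_coeff_zero_eq_zero h1
    have hc : ((1 - C a) * f).coeff 0 = (1 - a) * a := by
      simp [Polynomial.mul_coeff_zero, ← ha_def]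
    rw [hc, sub_mul, one_mul, ha, sub_self]
  have e2 : C a * (1 - f) = 0 := by
    apply idem_coeff_zero_eq_zero h2
    have hc : (C a * (1 - f)).coeff 0 = a * (1 - a) := by
      simp [Polynomial.mul_coeff_zero, ← ha_def]
    rw [hc, mul_sub, mul_one, ha, sub_self]
  have hfa : f = C a * f := by linear_combination e1
  have hca : C a = C a * f := by linear_combination e2
  rw [hfa, ← hca]

theorem stmt_14 (R : Type _) [CommRing R] [Nontrivial R] :
    IsWVNR (Polynomial R) ↔ ∀ e : R, IsIdempotentElem e → e = 0 ∨ e = 1 := by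
  constructor
  · intro hW e he
    by_contra hcon
    push_neg at hcon
    obtain ⟨he0, he1⟩ := hcon
    have heC : IsIdempotentElem (C e : R[X]) := by
      show C e * C e = C e
      rw [← C_mul, he]
    have hJne : Ideal.span ({C e} : Set R[X]) ≠ ⊤ := by
      intro htop
      have h1 : (1 : R[X]) ∈ Ideal.span ({C e} : Set R[X]) := htop ▸ Submodule.mem_top
      obtain ⟨h, hh⟩ := Ideal.mem_span_singleton.mp h1
      have h1e : (1 : R) = e * h.coeff 0 := by
        have := congrArg (fun p : R[X] => p.coeff 0) hh
        simpa [Polynomial.mul_coeff_zero] using this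
      apply he1
      calc e = e * (e * h.coeff 0) := by rw [← h1e, mul_one]
      _ = (e * e) * h.coeff 0 := by ring
      _ = e * h.coeff 0 := by rw [he]
      _ = 1 := h1e.symm
    have hIJ : Ideal.span ({C e * X} : Set R[X]) ≤ Ideal.span ({C e} : Set R[X]) := by
      rw [Ideal.span_singleton_le_span_singleton]
      exact ⟨X, rfl⟩
    obtain ⟨f, hfI, hfspan⟩ := hW (Ideal.span {C e * X}) (Ideal.span {C e})
      ⟨{C e * X}, by simp⟩ ⟨{C e}, by simp⟩ hIJ hJne ⟨C e, heC, rfl⟩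
    -- f = C a, and f ∈ span {C e * X} forces coeff 0 of f = 0, so f = 0
    have hfC : f = C (f.coeff 0) := idem_poly_eq_C hfI
    have hfmem : f ∈ Ideal.span ({C e * X} : Set R[X]) := by
      rw [hfspan]; exact Ideal.mem_span_singleton_self f
    obtain ⟨h, hh⟩ := Ideal.mem_span_singleton.mp hfmem
    have hc0 : f.coeff 0 = 0 := by
      have := congrArg (fun p : R[X] => p.coeff 0) hh
      simp at this
      simpa [Polynomial.mul_coeff_zero] using this
    have hf0 : f = 0 := by rw [hfC, hc0, map_zero]
    have hmem : C e * X ∈ Ideal.span ({f} : Set R[X]) := by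
      rw [← hfspan]; exact Ideal.mem_span_singleton_self _
    rw [hf0] at hmem
    simp [Ideal.span_singleton_eq_bot.mpr rfl] at hmem
    exact he0 hmem
  · intro htriv I J hIfg hJfg hIJ hJne ⟨e, he, hJ⟩
    have heC : e = C (e.coeff 0) := idem_poly_eq_C he
    have ha : IsIdempotentElem (e.coeff 0) := by
      have := congrArg (fun p : R[X] => p.coeff 0) he
      simpa [Polynomial.mul_coeff_zero, isIdempotentElem_iff] using this
    rcases htriv _ ha with h0 | h1
    · have he0 : e = 0 := by rw [heC, h0, map_zero]
      refine ⟨0, by simp [IsIdempotentElem], ?_⟩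
      have hJb : J = ⊥ := by rw [hJ, he0]; simp
      have hIb : I = ⊥ := le_bot_iff.mp (hJb ▸ hIJ)
      rw [hIb]
      exact (Ideal.span_singleton_eq_bot.mpr rfl).symm
    · exfalso
      apply hJne
      rw [hJ]
      have : e = 1 := by rw [heC, h1, map_one]
      rw [this, Ideal.span_singleton_one]
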